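/- arXiv:2403.07295 — 3 statements merged into one kernel-verified Lean document; each statement's English description precedes it below -/
import Mathlib

section
/- Let d ≥ 2 be an integer and 0 < r < d. Let R be a d×d real orthogonal matrix, Σ_r an r×r diagonal positive definite matrix, n_y > 0, and set n_Z := R·[[0_{(d−r)×(d−r)}, 0],[0, Σ_r]]·Rᵀ and n := (0, n_y, n_Z) ∈ E. Let Q be an r×(d−r) real matrix with 0 < λ_max(QᵀQ) ≤ 1, and for each integer k ≥ 1 define w^k := (−1, 0, R·[[I_{d−r}, Qᵀ/k],[Q/k, 0_{r×r}]]·Rᵀ) ∈ E, and set F_s := {(x, 0, Z) ∈ E : x ≤ 0, Z positive semidefinite, tr(Z·n_Z) = 0}. Then ⟨w^k, n⟩ = 0, dist(w^k, F_s) = √2·‖Q‖_F/k, dist(w^k, K_logdet) ≤ √r/k², and consequently dist(w^k, F_s) ≥ (√2·‖Q‖_F/r^{1/4}) · dist(w^k, K_logdet)^{1/2} for every k ≥ 1. (Hence the exponent 1/2 in the Hölderian error bound for F_s with n_y > 0 is tight.) -/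
open Matrix Filter

noncomputable section

/-- The space `E = ℝ × ℝ × S^d` (matrix parts are required to be symmetric where relevant). -/
abbrev E (d : ℕ) : Type := ℝ × ℝ × Matrix (Fin d) (Fin d) ℝ

/-- The inner product `⟨(x,y,Z),(x',y',Z')⟩ = x x' + y y' + tr (Z Z')` on `E`. -/
def ip {d : ℕ} (p q : E d) : ℝ := p.1 * q.1 + p.2.1 * q.2.1 + (p.2.2 * q.2.2).trace

/-- The induced norm `‖(x,y,Z)‖ = sqrt (x² + y² + tr (Z²))` on `E`. -/
def nrm {d : ℕ} (p : E d) : ℝ := Real.sqrt (p.1 ^ 2 + p.2.1 ^ 2 + (p.2.2 * p.2.2).trace)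

/-- Distance from a point to a set: `dist(p, S) = inf {‖p - s‖ : s ∈ S}`. -/
def sdist {d : ℕ} (p : E d) (S : Set (E d)) : ℝ := sInf {r : ℝ | ∃ s ∈ S, r = nrm (p - s)}

/-- The log-determinant cone `K_logdet`. -/
def Klogdet (d : ℕ) : Set (E d) :=
  {p | (0 < p.2.1 ∧ p.2.2.PosDef ∧ p.1 ≤ p.2.1 * Real.log ((p.2.1⁻¹ • p.2.2).det))
    ∨ (p.1 ≤ 0 ∧ p.2.1 = 0 ∧ p.2.2.PosSemidef)}

section Aux

set_option linter.unusedSectionVars false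

variable {n m : Type*} [Fintype n] [Fintype m] [DecidableEq n] [DecidableEq m]

lemma aux_psd_diag_nonneg {M : Matrix n n ℝ} (h : M.PosSemidef) (u : n) : 0 ≤ M u u := by
  simpa using h.dotProduct_mulVec_nonneg (Pi.single u 1)

lemma aux_pd_diag_pos {M : Matrix n n ℝ} (h : M.PosDef) (u : n) : 0 < M u u := by
  simpa using h.dotProduct_mulVec_pos (x := Pi.single u 1) (Function.ne_iff.mpr ⟨u, by simp⟩)

lemma aux_psd_offdiag_zero {M : Matrix n n ℝ} (h : M.PosSemidef) {i j : n}
    (hjj : M j j = 0) : M i j = 0 := by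
  have hsym : M j i = M i j := by
    have := congrFun (congrFun h.1 i) j
    simpa [Matrix.conjTranspose_apply] using this
  by_contra hne
  obtain ⟨t, ht⟩ : ∃ t : ℝ, t = -(M i i + 1) / (2 * M i j) := ⟨_, rfl⟩
  set x : n → ℝ := (Pi.single i (1:ℝ) : n → ℝ) + t • (Pi.single j (1:ℝ) : n → ℝ) with hx
  have hq := h.dotProduct_mulVec_nonneg x
  rw [star_trivial] at hq
  have hexp : x ⬝ᵥ M *ᵥ x = M i i + 2 * t * M i j := by
    simp only [hx, Pi.add_apply, Pi.smul_apply, Pi.single_apply, smul_eq_mul, dotProduct,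
      Matrix.mulVec, mul_add, add_mul, mul_ite, ite_mul, one_mul, mul_one, zero_mul, mul_zero,
      Finset.sum_add_distrib, Finset.sum_ite_eq', Finset.mem_univ, if_true]
    simp [hsym, hjj]
    ring
  rw [hexp] at hq
  have h3 : 2 * t * M i j = -(M i i + 1) := by
    rw [ht]; field_simp
  rw [h3] at hq
  linarith

lemma aux_trace_reindex (e : m ≃ n) (M : Matrix m m ℝ) :
    (Matrix.reindex e e M).trace = M.trace := by
  simp only [Matrix.trace, Matrix.reindex_apply, Matrix.submatrix_apply, Matrix.diag]
  exact Fintype.sum_equiv e.symm _ _ fun i => rfl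

lemma aux_reindex_mul (e : m ≃ n) (M N : Matrix m m ℝ) :
    (Matrix.reindex e e M) * (Matrix.reindex e e N) = Matrix.reindex e e (M * N) := by
  simp [Matrix.reindex_apply, Matrix.submatrix_mul_equiv]

lemma aux_conj_trace {R : Matrix n n ℝ} (hR : R * Rᵀ = 1) (e : m ≃ n) (M N : Matrix m m ℝ) :
    ((R * Matrix.reindex e e M * Rᵀ) * (R * Matrix.reindex e e N * Rᵀ)).trace = (M * N).trace := by
  have h2 : Rᵀ * R = 1 := mul_eq_one_comm.mp hR
  have key : (R * Matrix.reindex e e M * Rᵀ) * (R * Matrix.reindex e e N * Rᵀ)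
      = R * (Matrix.reindex e e M * (Rᵀ * R) * Matrix.reindex e e N) * Rᵀ := by noncomm_ring
  rw [key, h2, Matrix.mul_one, aux_reindex_mul, Matrix.trace_mul_cycle, h2, Matrix.one_mul,
    aux_trace_reindex]

lemma aux_conj_sub {R : Matrix n n ℝ} (e : m ≃ n) (M N : Matrix m m ℝ) :
    (R * Matrix.reindex e e M * Rᵀ) - (R * Matrix.reindex e e N * Rᵀ)
      = R * Matrix.reindex e e (M - N) * Rᵀ := by
  have h : Matrix.reindex e e (M - N) = Matrix.reindex e e M - Matrix.reindex e e N := by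
    ext i j; simp
  rw [h, Matrix.mul_sub, Matrix.sub_mul]

lemma aux_conj_psd {R : Matrix n n ℝ} (hR : R * Rᵀ = 1) (e : m ≃ n) {M : Matrix m m ℝ}
    (hM : M.PosSemidef) : (R * Matrix.reindex e e M * Rᵀ).PosSemidef := by
  have h1 : (Matrix.reindex e e M).PosSemidef := hM.submatrix e.symm
  have := h1.mul_mul_conjTranspose_same R
  rwa [Matrix.conjTranspose_eq_transpose_of_trivial] at this

lemma aux_conj_back_psd {R : Matrix n n ℝ} (e : m ≃ n) {Z : Matrix n n ℝ}
    (hZ : Z.PosSemidef) : (Matrix.reindex e.symm e.symm (Rᵀ * Z * R)).PosSemidef := by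
  have h1 : (Rᵀ * Z * R).PosSemidef := by
    have := hZ.mul_mul_conjTranspose_same Rᵀ
    rwa [Matrix.conjTranspose_eq_transpose_of_trivial, Matrix.transpose_transpose] at this
  exact h1.submatrix e

lemma aux_trace_mul_sum (M N : Matrix m m ℝ) :
    (M * N).trace = ∑ u, ∑ v, M u v * N v u := by
  simp [Matrix.trace, Matrix.mul_apply, Matrix.diag]

lemma aux_trace_fromBlocks {l : Type*} [Fintype l] (A : Matrix m m ℝ) (B : Matrix m l ℝ)
    (C : Matrix l m ℝ) (D : Matrix l l ℝ) :
    (Matrix.fromBlocks A B C D).trace = A.trace + D.trace := by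
  simp [Matrix.trace, Matrix.diag, Fintype.sum_sum_type]

lemma aux_trace_transpose_mul_self {l : Type*} [Fintype l] (Q : Matrix m l ℝ) :
    (Qᵀ * Q).trace = ∑ j, ∑ i, Q i j ^ 2 := by
  simp [Matrix.trace, Matrix.mul_apply, Matrix.diag, sq]

lemma aux_trace_QtQ_nonneg {l : Type*} [Fintype l] (Q : Matrix m l ℝ) :
    0 ≤ (Qᵀ * Q).trace := by
  rw [aux_trace_transpose_mul_self]
  positivity

end Aux


set_option maxHeartbeats 1600000 in
/-- Remark 3.2 (tightness of the Hölderian error bound for `F_s`, `n_y > 0`): with `d = s + r`,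
`0 < r < d`, `n_Z = R [[0,0],[0,Sig_r]] Rᵀ` for an orthogonal `R` and a diagonal `Sig_r ≻ 0`,
`n = (0, n_y, n_Z)` with `n_y > 0`, a matrix `Q` with `0 < λ_max(QᵀQ) ≤ 1`, and
`w^k = (-1, 0, R [[I, Qᵀ/k],[Q/k, 0]] Rᵀ)`, one has `⟨w^k, n⟩ = 0`,
`dist(w^k, F_s) = √2 ‖Q‖_F / k`, `dist(w^k, K_logdet) ≤ √r / k²`, and
`dist(w^k, F_s) ≥ (√2 ‖Q‖_F / r^(1/4)) dist(w^k, K_logdet)^(1/2)`. -/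
theorem stmt_13 (s r : ℕ) (hs : 0 < s) (hr : 0 < r)
    (R : Matrix (Fin (s + r)) (Fin (s + r)) ℝ) (hR : R * Rᵀ = 1)
    (Sig : Matrix (Fin r) (Fin r) ℝ) (hSigdiag : Sig.IsDiag) (hSigpos : Sig.PosDef)
    (ny : ℝ) (hny : 0 < ny)
    (Q : Matrix (Fin r) (Fin s) ℝ) (hQQ : (Qᵀ * Q).IsHermitian)
    (hQmaxpos : ∃ i, 0 < hQQ.eigenvalues i) (hQmaxle : ∀ i, hQQ.eigenvalues i ≤ 1) :
    ∀ k : ℕ, 1 ≤ k →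
      ip ((-1, 0, R * (Matrix.reindex finSumFinEquiv finSumFinEquiv
            (Matrix.fromBlocks (1 : Matrix (Fin s) (Fin s) ℝ)
              ((k : ℝ)⁻¹ • Qᵀ) ((k : ℝ)⁻¹ • Q) (0 : Matrix (Fin r) (Fin r) ℝ))) * Rᵀ) : E (s + r))
        ((0, ny, R * (Matrix.reindex finSumFinEquiv finSumFinEquiv
            (Matrix.fromBlocks (0 : Matrix (Fin s) (Fin s) ℝ) 0 0 Sig)) * Rᵀ) : E (s + r)) = 0 ∧
      sdist ((-1, 0, R * (Matrix.reindex finSumFinEquiv finSumFinEquiv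
            (Matrix.fromBlocks (1 : Matrix (Fin s) (Fin s) ℝ)
              ((k : ℝ)⁻¹ • Qᵀ) ((k : ℝ)⁻¹ • Q) (0 : Matrix (Fin r) (Fin r) ℝ))) * Rᵀ) : E (s + r))
          {p : E (s + r) | p.1 ≤ 0 ∧ p.2.1 = 0 ∧ p.2.2.PosSemidef ∧
            (p.2.2 * (R * (Matrix.reindex finSumFinEquiv finSumFinEquiv
              (Matrix.fromBlocks (0 : Matrix (Fin s) (Fin s) ℝ) 0 0 Sig)) * Rᵀ)).trace = 0}
        = Real.sqrt 2 * Real.sqrt ((Qᵀ * Q).trace) / k ∧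
      sdist ((-1, 0, R * (Matrix.reindex finSumFinEquiv finSumFinEquiv
            (Matrix.fromBlocks (1 : Matrix (Fin s) (Fin s) ℝ)
              ((k : ℝ)⁻¹ • Qᵀ) ((k : ℝ)⁻¹ • Q) (0 : Matrix (Fin r) (Fin r) ℝ))) * Rᵀ) : E (s + r))
          (Klogdet (s + r)) ≤ Real.sqrt r / (k : ℝ) ^ 2 ∧
      Real.sqrt 2 * Real.sqrt ((Qᵀ * Q).trace) / (r : ℝ) ^ ((1 : ℝ) / 4) *
          sdist ((-1, 0, R * (Matrix.reindex finSumFinEquiv finSumFinEquiv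
            (Matrix.fromBlocks (1 : Matrix (Fin s) (Fin s) ℝ)
              ((k : ℝ)⁻¹ • Qᵀ) ((k : ℝ)⁻¹ • Q) (0 : Matrix (Fin r) (Fin r) ℝ))) * Rᵀ) : E (s + r))
            (Klogdet (s + r)) ^ ((1 : ℝ) / 2)
        ≤ sdist ((-1, 0, R * (Matrix.reindex finSumFinEquiv finSumFinEquiv
            (Matrix.fromBlocks (1 : Matrix (Fin s) (Fin s) ℝ)
              ((k : ℝ)⁻¹ • Qᵀ) ((k : ℝ)⁻¹ • Q) (0 : Matrix (Fin r) (Fin r) ℝ))) * Rᵀ) : E (s + r))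
          {p : E (s + r) | p.1 ≤ 0 ∧ p.2.1 = 0 ∧ p.2.2.PosSemidef ∧
            (p.2.2 * (R * (Matrix.reindex finSumFinEquiv finSumFinEquiv
              (Matrix.fromBlocks (0 : Matrix (Fin s) (Fin s) ℝ) 0 0 Sig)) * Rᵀ)).trace = 0} := by
  intro k hk
  have hk0 : (0:ℝ) < k := by exact_mod_cast hk
  set e : (Fin s ⊕ Fin r) ≃ Fin (s + r) := finSumFinEquiv with he
  set A : Matrix (Fin s ⊕ Fin r) (Fin s ⊕ Fin r) ℝ :=
    Matrix.fromBlocks (1 : Matrix (Fin s) (Fin s) ℝ)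
      ((k : ℝ)⁻¹ • Qᵀ) ((k : ℝ)⁻¹ • Q) (0 : Matrix (Fin r) (Fin r) ℝ) with hA
  set C : Matrix (Fin s ⊕ Fin r) (Fin s ⊕ Fin r) ℝ :=
    Matrix.fromBlocks (0 : Matrix (Fin s) (Fin s) ℝ) 0 0 Sig with hC
  set W : Matrix (Fin (s+r)) (Fin (s+r)) ℝ := R * (Matrix.reindex e e A) * Rᵀ with hW
  set NZ : Matrix (Fin (s+r)) (Fin (s+r)) ℝ := R * (Matrix.reindex e e C) * Rᵀ with hNZ
  set t : ℝ := (Qᵀ * Q).trace with htdef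
  have ht0 : 0 ≤ t := aux_trace_QtQ_nonneg Q
  set c : ℝ := Real.sqrt 2 * Real.sqrt t / k with hcdef
  have hc0 : 0 ≤ c := by positivity
  set wk : E (s + r) := (-1, 0, W) with hwk
  -- the feasible set F and the distance candidate sets
  set F : Set (E (s + r)) := {p : E (s + r) | p.1 ≤ 0 ∧ p.2.1 = 0 ∧ p.2.2.PosSemidef ∧
      (p.2.2 * NZ).trace = 0} with hF
  have hconjtr : ∀ M N : Matrix (Fin s ⊕ Fin r) (Fin s ⊕ Fin r) ℝ,
      ((R * Matrix.reindex e e M * Rᵀ) * (R * Matrix.reindex e e N * Rᵀ)).trace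
        = (M * N).trace := fun M N => aux_conj_trace hR e M N
  -- Claim 1
  have hclaim1 : ip wk ((0, ny, NZ) : E (s+r)) = 0 := by
    have h1 : (W * NZ).trace = (A * C).trace := hconjtr A C
    simp only [ip, hwk, h1]
    rw [hA, hC, Matrix.fromBlocks_multiply]
    rw [aux_trace_fromBlocks]
    simp
  -- the projection candidate for F
  set P1 : Matrix (Fin s ⊕ Fin r) (Fin s ⊕ Fin r) ℝ :=
    Matrix.fromBlocks (1 : Matrix (Fin s) (Fin s) ℝ) 0 0 (0 : Matrix (Fin r) (Fin r) ℝ) with hP1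
  have hP1psd : P1.PosSemidef := by
    have hdg : P1 = Matrix.diagonal (Sum.elim (1 : Fin s → ℝ) (0 : Fin r → ℝ)) := by
      rw [hP1]
      ext (i|i) (j|j) <;>
        simp [Matrix.diagonal_apply, Matrix.one_apply, Sum.elim, Sum.inl.injEq, Sum.inr.injEq]
    rw [hdg]
    exact Matrix.PosSemidef.diagonal (fun i => by cases i <;> simp)
  set pstar : E (s + r) := (-1, 0, R * (Matrix.reindex e e P1) * Rᵀ) with hpstar
  have hpstarF : pstar ∈ F := by
    refine ⟨by norm_num, rfl, aux_conj_psd hR e hP1psd, ?_⟩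
    show ((R * (Matrix.reindex e e P1) * Rᵀ) * NZ).trace = 0
    rw [hNZ, hconjtr P1 C, hP1, hC, Matrix.fromBlocks_multiply, aux_trace_fromBlocks]
    simp
  have hDsub : A - P1 = Matrix.fromBlocks 0 ((k:ℝ)⁻¹ • Qᵀ) ((k:ℝ)⁻¹ • Q) 0 := by
    rw [hA, hP1, sub_eq_add_neg, Matrix.fromBlocks_neg, Matrix.fromBlocks_add]
    simp
  have htrD : ((A - P1) * (A - P1)).trace = (k:ℝ)⁻¹ * (k:ℝ)⁻¹ * (2 * t) := by
    rw [hDsub, Matrix.fromBlocks_multiply, aux_trace_fromBlocks]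
    simp only [Matrix.mul_zero, Matrix.zero_mul, add_zero, zero_add,
      Matrix.smul_mul, Matrix.mul_smul, Matrix.trace_smul, smul_eq_mul]
    rw [Matrix.trace_mul_comm Q Qᵀ, ← htdef]
    ring
  have hnrm_pstar : nrm (wk - pstar) = c := by
    have hsub : wk - pstar = ((0:ℝ), (0:ℝ), R * Matrix.reindex e e (A - P1) * Rᵀ) := by
      rw [hwk, hpstar, Prod.mk_sub_mk, Prod.mk_sub_mk, hW, ← aux_conj_sub (R := R) e A P1]
      norm_num
    rw [hsub]
    simp only [nrm]
    rw [hconjtr (A - P1) (A - P1), htrD]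
    have hcarg : (0:ℝ) ^ 2 + (0:ℝ) ^ 2 + (k:ℝ)⁻¹ * (k:ℝ)⁻¹ * (2 * t) = c ^ 2 := by
      have hk2 : ((k:ℝ))^2 ≠ 0 := by positivity
      rw [hcdef, div_pow, mul_pow, Real.sq_sqrt (by norm_num : (0:ℝ) ≤ 2), Real.sq_sqrt ht0,
        eq_div_iff hk2]
      ring_nf
      rw [← mul_pow, mul_inv_cancel₀ (ne_of_gt hk0), one_pow, one_mul]
    rw [hcarg, Real.sqrt_sq hc0]
  have hc2 : c ^ 2 = 2 * t / (k:ℝ)^2 := by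
    rw [hcdef, div_pow, mul_pow, Real.sq_sqrt (by norm_num : (0:ℝ) ≤ 2), Real.sq_sqrt ht0]
  have hAsym : Aᵀ = A := by
    rw [hA, Matrix.fromBlocks_transpose]
    simp
  -- lower bound on the distance to F
  have hlbF : ∀ ρ ∈ {ρ : ℝ | ∃ q ∈ F, ρ = nrm (wk - q)}, c ≤ ρ := by
    rintro ρ ⟨p, ⟨hp1, hp2, hp3, hp4⟩, rfl⟩
    set Z := p.2.2 with hZ
    set B : Matrix (Fin s ⊕ Fin r) (Fin s ⊕ Fin r) ℝ :=
      Matrix.reindex e.symm e.symm (Rᵀ * Z * R) with hB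
    have hBeq : Matrix.reindex e e B = Rᵀ * Z * R := by rw [hB]; simp
    have hZeq : Z = R * Matrix.reindex e e B * Rᵀ := by
      rw [hBeq]
      calc Z = (R * Rᵀ) * Z * (R * Rᵀ) := by rw [hR, Matrix.one_mul, Matrix.mul_one]
        _ = R * (Rᵀ * Z * R) * Rᵀ := by noncomm_ring
    have hBpsd : B.PosSemidef := aux_conj_back_psd e hp3
    have hBsym : Bᵀ = B := by
      rw [← Matrix.conjTranspose_eq_transpose_of_trivial]
      exact hBpsd.1
    have htrB : ∑ b, B (Sum.inr b) (Sum.inr b) * Sig b b = 0 := by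
      have h0 : (Z * NZ).trace = (B * C).trace := by
        rw [hZeq, hNZ]; exact hconjtr B C
      rw [hp4] at h0
      have hexp : (B * C).trace = ∑ b, ∑ x, B (Sum.inr b) (Sum.inr x) * Sig x b := by
        simp only [Matrix.trace, Matrix.diag, Matrix.mul_apply, Fintype.sum_sum_type, hC,
          Matrix.fromBlocks_apply₁₁, Matrix.fromBlocks_apply₁₂, Matrix.fromBlocks_apply₂₁,
          Matrix.fromBlocks_apply₂₂, Matrix.zero_apply, mul_zero, Finset.sum_const_zero,
          add_zero, zero_add]
      have hdiagsum : ∀ b, ∑ x, B (Sum.inr b) (Sum.inr x) * Sig x b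
          = B (Sum.inr b) (Sum.inr b) * Sig b b := by
        intro b
        refine Finset.sum_eq_single b (fun x _ hx => ?_) (fun hb => absurd (Finset.mem_univ b) hb)
        rw [hSigdiag hx, mul_zero]
      rw [hexp] at h0
      simp only [hdiagsum] at h0
      linarith [h0]
    have hB22 : ∀ b, B (Sum.inr b) (Sum.inr b) = 0 := by
      intro b
      have hnn : ∀ x ∈ Finset.univ, (0:ℝ) ≤ B (Sum.inr x) (Sum.inr x) * Sig x x := fun x _ =>
        mul_nonneg (aux_psd_diag_nonneg hBpsd _) (le_of_lt (aux_pd_diag_pos hSigpos x))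
      have hz := (Finset.sum_eq_zero_iff_of_nonneg hnn).mp htrB b (Finset.mem_univ b)
      rcases mul_eq_zero.mp hz with h | h
      · exact h
      · exact absurd h (ne_of_gt (aux_pd_diag_pos hSigpos b))
    have hBoff : ∀ a b, B (Sum.inl a) (Sum.inr b) = 0 := fun a b =>
      aux_psd_offdiag_zero hBpsd (hB22 b)
    have hBoff' : ∀ a b, B (Sum.inr b) (Sum.inl a) = 0 := by
      intro a b
      have h := congrFun (congrFun hBpsd.1 (Sum.inr b)) (Sum.inl a)
      rw [Matrix.conjTranspose_apply, star_trivial, hBoff a b] at h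
      exact h.symm
    have hWZ : W - Z = R * Matrix.reindex e e (A - B) * Rᵀ := by
      rw [hW, hZeq, aux_conj_sub]
    have hsub : wk - p = (-1 - p.1, (0:ℝ) - p.2.1, R * Matrix.reindex e e (A - B) * Rᵀ) := by
      rw [hwk, Prod.sub_def, Prod.sub_def, ← hWZ]
    have h12 : ∀ (a : Fin s) (b : Fin r), (A - B) (Sum.inl a) (Sum.inr b) = (k:ℝ)⁻¹ * Q b a := by
      intro a b
      rw [Matrix.sub_apply, hBoff a b, sub_zero, hA]
      simp
    have h21 : ∀ (a : Fin s) (b : Fin r), (A - B) (Sum.inr b) (Sum.inl a) = (k:ℝ)⁻¹ * Q b a := by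
      intro a b
      rw [Matrix.sub_apply, hBoff' a b, sub_zero, hA]
      simp
    have hsum : (2:ℝ) * t / (k:ℝ)^2 ≤ ((A - B) * (A - B)).trace := by
      rw [aux_trace_mul_sum]
      have hsq : ∀ u v, (A - B) u v * (A - B) v u = ((A - B) u v)^2 := by
        intro u v
        have hAB : (A - B)ᵀ = A - B := by rw [Matrix.transpose_sub, hAsym, hBsym]
        have h := congrFun (congrFun hAB u) v
        rw [Matrix.transpose_apply] at h
        rw [h, sq]
      have h12eq : ∑ a, ∑ b, ((A - B) (Sum.inl a) (Sum.inr b))^2 = (k:ℝ)⁻¹^2 * t := by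
        simp only [h12, mul_pow]
        rw [htdef, aux_trace_transpose_mul_self, Finset.mul_sum]
        refine Finset.sum_congr rfl fun a _ => ?_
        rw [Finset.mul_sum]
      have h21eq : ∑ b, ∑ a, ((A - B) (Sum.inr b) (Sum.inl a))^2 = (k:ℝ)⁻¹^2 * t := by
        simp only [h21, mul_pow]
        rw [htdef, aux_trace_transpose_mul_self, Finset.sum_comm, Finset.mul_sum]
        refine Finset.sum_congr rfl fun a _ => ?_
        rw [Finset.mul_sum]
      simp only [hsq]
      rw [Fintype.sum_sum_type]
      simp only [Fintype.sum_sum_type]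
      rw [Finset.sum_add_distrib, Finset.sum_add_distrib]
      have h11 : (0:ℝ) ≤ ∑ a : Fin s, ∑ x : Fin s, ((A - B) (Sum.inl a) (Sum.inl x))^2 := by
        positivity
      have h22 : (0:ℝ) ≤ ∑ b : Fin r, ∑ x : Fin r, ((A - B) (Sum.inr b) (Sum.inr x))^2 := by
        positivity
      have hkne : ((k:ℝ))^2 ≠ 0 := by positivity
      have h2t : 2 * t / (k:ℝ)^2 = (k:ℝ)⁻¹^2*t + (k:ℝ)⁻¹^2*t := by
        field_simp
        ring
      rw [h2t]
      linarith [h12eq, h21eq, h11, h22]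
    rw [hsub]
    simp only [nrm]
    rw [hconjtr (A - B) (A - B)]
    have harg : c^2 ≤ (-1 - p.1)^2 + ((0:ℝ) - p.2.1)^2 + ((A - B) * (A - B)).trace := by
      have h1 := sq_nonneg (-1 - p.1)
      have h2' := sq_nonneg ((0:ℝ) - p.2.1)
      rw [hc2]; linarith [hsum]
    calc c = Real.sqrt (c^2) := (Real.sqrt_sq hc0).symm
      _ ≤ _ := Real.sqrt_le_sqrt harg
  have hSFmem : c ∈ {ρ : ℝ | ∃ q ∈ F, ρ = nrm (wk - q)} := ⟨pstar, hpstarF, hnrm_pstar.symm⟩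
  have hclaim2 : sdist wk F = c := by
    show sInf {ρ : ℝ | ∃ q ∈ F, ρ = nrm (wk - q)} = c
    exact le_antisymm (csInf_le ⟨c, fun ρ hρ => hlbF ρ hρ⟩ hSFmem)
      (le_csInf ⟨c, hSFmem⟩ hlbF)
  -- Claim 3 : distance to the log-det cone
  set u : ℝ := (k:ℝ)⁻¹ * (k:ℝ)⁻¹ with hu
  set Zk : Matrix (Fin s ⊕ Fin r) (Fin s ⊕ Fin r) ℝ :=
    Matrix.fromBlocks 1 ((k:ℝ)⁻¹ • Qᵀ) ((k:ℝ)⁻¹ • Q) (u • (Q * Qᵀ)) with hZk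
  have hZkpsd : Zk.PosSemidef := by
    have hform : Zk = (Matrix.fromCols (1 : Matrix (Fin s) (Fin s) ℝ) ((k:ℝ)⁻¹ • Qᵀ))ᴴ *
        (Matrix.fromCols 1 ((k:ℝ)⁻¹ • Qᵀ)) := by
      rw [Matrix.conjTranspose_fromCols_eq_fromRows_conjTranspose,
        Matrix.fromRows_mul_fromCols, hZk]
      congr 1 <;>
        simp [Matrix.conjTranspose_eq_transpose_of_trivial, Matrix.transpose_smul,
          Matrix.smul_mul, Matrix.mul_smul, smul_smul, hu]
    rw [hform]
    exact Matrix.posSemidef_conjTranspose_mul_self _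
  set pK : E (s + r) := (-1, 0, R * (Matrix.reindex e e Zk) * Rᵀ) with hpK
  have hpKmem : pK ∈ Klogdet (s + r) := Or.inr ⟨by norm_num, rfl, aux_conj_psd hR e hZkpsd⟩
  have hAZk : A - Zk = Matrix.fromBlocks 0 0 0 ((-u) • (Q * Qᵀ)) := by
    rw [hA, hZk, sub_eq_add_neg, Matrix.fromBlocks_neg, Matrix.fromBlocks_add]
    simp [neg_smul]
  set T : ℝ := ((Q * Qᵀ) * (Q * Qᵀ)).trace with hT
  have htrAZk : ((A - Zk) * (A - Zk)).trace = u^2 * T := by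
    rw [hAZk, Matrix.fromBlocks_multiply, aux_trace_fromBlocks]
    simp only [Matrix.mul_zero, Matrix.zero_mul, add_zero, zero_add, Matrix.trace_zero,
      Matrix.smul_mul, Matrix.mul_smul, Matrix.trace_smul, smul_eq_mul, smul_smul]
    rw [← hT]
    ring
  -- spectral bound : T ≤ r
  have hGpsd : (Qᵀ * Q).PosSemidef := by
    have h := Matrix.posSemidef_conjTranspose_mul_self Q
    rwa [Matrix.conjTranspose_eq_transpose_of_trivial] at h
  have hev0 : ∀ i, 0 ≤ hQQ.eigenvalues i := fun i => hGpsd.eigenvalues_nonneg i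
  have htrG2 : ((Qᵀ * Q) * (Qᵀ * Q)).trace = ∑ i, (hQQ.eigenvalues i)^2 := by
    set U : Matrix (Fin s) (Fin s) ℝ := (hQQ.eigenvectorUnitary : Matrix (Fin s) (Fin s) ℝ)
      with hUdef
    have hUU : star U * U = 1 := Matrix.mem_unitaryGroup_iff'.mp hQQ.eigenvectorUnitary.2
    set D : Matrix (Fin s) (Fin s) ℝ := Matrix.diagonal (RCLike.ofReal ∘ hQQ.eigenvalues) with hD
    have hGG : (Qᵀ * Q) * (Qᵀ * Q) = U * (D * D) * star U := by
      conv_lhs => rw [hQQ.spectral_theorem]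
      calc (U * D * star U) * (U * D * star U) = U * (D * (star U * U) * D) * star U := by
            noncomm_ring
        _ = U * (D * D) * star U := by rw [hUU, Matrix.mul_one, Matrix.mul_assoc]
    rw [hGG, Matrix.trace_mul_cycle, ← Matrix.mul_assoc, hUU, Matrix.one_mul]
    rw [hD, Matrix.diagonal_mul_diagonal, Matrix.trace_diagonal]
    simp [sq]
  have hTbound : T ≤ (r:ℝ) := by
    have hcyc : T = ((Qᵀ * Q) * (Qᵀ * Q)).trace := by
      have h1 : (Q * Qᵀ) * (Q * Qᵀ) = Q * (Qᵀ * Q * Qᵀ) := by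
        rw [Matrix.mul_assoc, ← Matrix.mul_assoc Qᵀ Q Qᵀ]
      have h2 : (Qᵀ * Q * Qᵀ) * Q = (Qᵀ * Q) * (Qᵀ * Q) := by rw [Matrix.mul_assoc]
      rw [hT, h1, Matrix.trace_mul_comm, h2]
    have hrank : (Qᵀ * Q).rank ≤ r :=
      le_trans (Matrix.rank_mul_le_right Qᵀ Q) (Matrix.rank_le_height Q)
    have hcard : Fintype.card {i // hQQ.eigenvalues i ≠ 0} ≤ r := by
      rw [← hQQ.rank_eq_card_non_zero_eigs]
      exact hrank
    classical
    have hsplit : ∑ i, (hQQ.eigenvalues i)^2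
        = ∑ i ∈ Finset.univ.filter (fun i => hQQ.eigenvalues i ≠ 0), (hQQ.eigenvalues i)^2 := by
      symm
      refine Finset.sum_filter_of_ne fun i _ h => ?_
      intro h0
      exact h (by rw [h0]; ring)
    have hbound : ∑ i ∈ Finset.univ.filter (fun i => hQQ.eigenvalues i ≠ 0),
        (hQQ.eigenvalues i)^2
        ≤ ∑ _i ∈ Finset.univ.filter (fun i => hQQ.eigenvalues i ≠ 0), (1:ℝ) :=
      Finset.sum_le_sum fun i _ => by nlinarith [hev0 i, hQmaxle i]
    have hcards : (Finset.univ.filter (fun i => hQQ.eigenvalues i ≠ 0)).card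
        = Fintype.card {i // hQQ.eigenvalues i ≠ 0} := (Fintype.card_subtype _).symm
    calc T = ∑ i, (hQQ.eigenvalues i)^2 := by rw [hcyc, htrG2]
      _ = _ := hsplit
      _ ≤ _ := hbound
      _ = ((Finset.univ.filter (fun i => hQQ.eigenvalues i ≠ 0)).card : ℝ) := by
          rw [Finset.sum_const, nsmul_eq_mul, mul_one]
      _ ≤ (r:ℝ) := by
          rw [hcards]
          exact_mod_cast hcard
  have hT0 : 0 ≤ T := by
    rw [hT, aux_trace_mul_sum]
    have hsym : (Q * Qᵀ)ᵀ = Q * Qᵀ := by rw [Matrix.transpose_mul, Matrix.transpose_transpose]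
    refine Finset.sum_nonneg fun i _ => Finset.sum_nonneg fun j _ => ?_
    have h := congrFun (congrFun hsym j) i
    rw [Matrix.transpose_apply] at h
    rw [h]
    exact mul_self_nonneg _
  have hsubK : wk - pK = ((0:ℝ), (0:ℝ), R * Matrix.reindex e e (A - Zk) * Rᵀ) := by
    rw [hwk, hpK, Prod.mk_sub_mk, Prod.mk_sub_mk, hW, ← aux_conj_sub (R := R) e A Zk]
    norm_num
  have hu2 : u^2 = ((k:ℝ)^4)⁻¹ := by
    rw [hu, mul_pow, ← pow_add, inv_pow]
  have hnrmK : nrm (wk - pK) ≤ Real.sqrt r / (k:ℝ)^2 := by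
    rw [hsubK]
    simp only [nrm]
    rw [hconjtr (A - Zk) (A - Zk), htrAZk]
    have h1 : (Real.sqrt r / (k:ℝ)^2)^2 = (r:ℝ) / (k:ℝ)^4 := by
      rw [div_pow, Real.sq_sqrt (by positivity : (0:ℝ) ≤ (r:ℝ)), ← pow_mul]
    have harg : (0:ℝ)^2 + (0:ℝ)^2 + u^2 * T ≤ (Real.sqrt r / (k:ℝ)^2)^2 := by
      have hmul : u^2 * T ≤ ((k:ℝ)^4)⁻¹ * (r:ℝ) := by
        rw [hu2]
        exact mul_le_mul_of_nonneg_left hTbound (by positivity)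
      have h2 : (r:ℝ)/(k:ℝ)^4 = ((k:ℝ)^4)⁻¹ * (r:ℝ) := by ring
      rw [h1, h2]
      nlinarith [hmul]
    calc Real.sqrt ((0:ℝ)^2 + (0:ℝ)^2 + u^2 * T)
        ≤ Real.sqrt ((Real.sqrt r / (k:ℝ)^2)^2) := Real.sqrt_le_sqrt harg
      _ = Real.sqrt r / (k:ℝ)^2 := Real.sqrt_sq (by positivity)
  have hKlb : ∀ ρ ∈ {ρ : ℝ | ∃ q ∈ Klogdet (s+r), ρ = nrm (wk - q)}, (0:ℝ) ≤ ρ := by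
    rintro ρ ⟨q, _, rfl⟩
    exact Real.sqrt_nonneg _
  have hclaim3 : sdist wk (Klogdet (s+r)) ≤ Real.sqrt r / (k:ℝ)^2 := by
    show sInf {ρ : ℝ | ∃ q ∈ Klogdet (s+r), ρ = nrm (wk - q)} ≤ _
    exact le_trans (csInf_le ⟨0, fun ρ hρ => hKlb ρ hρ⟩ ⟨pK, hpKmem, rfl⟩) hnrmK
  have hK0 : 0 ≤ sdist wk (Klogdet (s+r)) :=
    le_csInf ⟨nrm (wk - pK), pK, hpKmem, rfl⟩ hKlb
  refine ⟨hclaim1, hclaim2, hclaim3, ?_⟩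
  rw [hclaim2]
  have hr0 : (0:ℝ) < (r:ℝ) := by exact_mod_cast hr
  have hr4 : (0:ℝ) < (r:ℝ) ^ ((1:ℝ)/4) := Real.rpow_pos_of_pos hr0 _
  have hrpow : (Real.sqrt r / (k:ℝ)^2) ^ ((1:ℝ)/2) = (r:ℝ)^((1:ℝ)/4) / (k:ℝ) := by
    rw [Real.div_rpow (Real.sqrt_nonneg _) (by positivity : (0:ℝ) ≤ (k:ℝ)^2)]
    congr 1
    · rw [Real.sqrt_eq_rpow, ← Real.rpow_mul (le_of_lt hr0)]
      norm_num
    · rw [← Real.rpow_natCast ((k:ℝ)) 2, ← Real.rpow_mul (le_of_lt hk0)]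
      norm_num
  have hd : sdist wk (Klogdet (s+r)) ^ ((1:ℝ)/2) ≤ (r:ℝ)^((1:ℝ)/4) / (k:ℝ) := by
    rw [← hrpow]
    exact Real.rpow_le_rpow hK0 hclaim3 (by norm_num)
  calc Real.sqrt 2 * Real.sqrt t / (r:ℝ)^((1:ℝ)/4) * sdist wk (Klogdet (s+r)) ^ ((1:ℝ)/2)
      ≤ Real.sqrt 2 * Real.sqrt t / (r:ℝ)^((1:ℝ)/4) * ((r:ℝ)^((1:ℝ)/4) / (k:ℝ)) :=
        mul_le_mul_of_nonneg_left hd (by positivity)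
    _ = c := by
        rw [hcdef]
        field_simp
end
end

section
/- Let d ≥ 2 be an integer, let n_y > 0 be real, and let n_Z be a d×d real symmetric positive definite matrix; set n := (0, n_y, n_Z) ∈ E and F_∞ := {(x, 0, 0) ∈ E : x ≤ 0} (which equals K_logdet ∩ {n}^⊥). Then for every η > 0 there exists κ > 0 such that for every q ∈ E with ⟨q, n⟩ = 0 and ‖q‖ ≤ η one has dist(q, F_∞) ≤ κ · dist(q, K_logdet), i.e. a Lipschitz error bound holds. -/
open Matrix Filter

noncomputable section

/- ### Auxiliary lemmas -/

/-- squared Frobenius norm -/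
def S2 {d : ℕ} (A : Matrix (Fin d) (Fin d) ℝ) : ℝ := ∑ i, ∑ j, (A i j) ^ 2

lemma S2_nonneg {d : ℕ} (A : Matrix (Fin d) (Fin d) ℝ) : 0 ≤ S2 A :=
  Finset.sum_nonneg fun _ _ => Finset.sum_nonneg fun _ _ => sq_nonneg _

lemma S2_sub_comm {d : ℕ} (A B : Matrix (Fin d) (Fin d) ℝ) : S2 (A - B) = S2 (B - A) := by
  unfold S2
  refine Finset.sum_congr rfl fun i _ => Finset.sum_congr rfl fun j _ => ?_
  rw [Matrix.sub_apply, Matrix.sub_apply]; ring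

lemma trace_mul_sum' {d : ℕ} (A B : Matrix (Fin d) (Fin d) ℝ) :
    (A * B).trace = ∑ i, ∑ j, A i j * B j i := by
  simp [Matrix.trace, Matrix.mul_apply, Matrix.diag]

lemma trace_sq_of_symm {d : ℕ} {A : Matrix (Fin d) (Fin d) ℝ} (hA : A.IsSymm) :
    (A * A).trace = S2 A := by
  rw [trace_mul_sum']
  unfold S2
  congr 1; funext i; congr 1; funext j
  rw [hA.apply, sq]

/-- Cauchy-Schwarz for the trace inner product. -/
lemma trace_mul_le {d : ℕ} (A B : Matrix (Fin d) (Fin d) ℝ) :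
    (A * B).trace ≤ Real.sqrt (S2 A) * Real.sqrt (S2 B) := by
  rw [trace_mul_sum']
  have h2 : (∑ p : Fin d × Fin d, A p.1 p.2 * B p.2 p.1) ^ 2
      ≤ (∑ p : Fin d × Fin d, (A p.1 p.2) ^ 2) * (∑ p : Fin d × Fin d, (B p.2 p.1) ^ 2) :=
    Finset.sum_mul_sq_le_sq_mul_sq _ _ _
  have e1 : (∑ p : Fin d × Fin d, A p.1 p.2 * B p.2 p.1) = ∑ i, ∑ j, A i j * B j i := by
    rw [← Finset.sum_product']; rfl
  have e2 : (∑ p : Fin d × Fin d, (A p.1 p.2) ^ 2) = S2 A := by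
    unfold S2; rw [← Finset.sum_product']; rfl
  have e3 : (∑ p : Fin d × Fin d, (B p.2 p.1) ^ 2) = S2 B := by
    unfold S2
    rw [← Finset.sum_product']
    exact Finset.sum_nbij' (fun p => (p.2, p.1)) (fun p => (p.2, p.1))
      (by simp) (by simp) (by simp) (by simp) (by simp)
  rw [e1, e2, e3] at h2
  calc (∑ i, ∑ j, A i j * B j i) ≤ |∑ i, ∑ j, A i j * B j i| := le_abs_self _
    _ = Real.sqrt ((∑ i, ∑ j, A i j * B j i) ^ 2) := (Real.sqrt_sq_eq_abs _).symm
    _ ≤ Real.sqrt (S2 A * S2 B) := Real.sqrt_le_sqrt h2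
    _ = Real.sqrt (S2 A) * Real.sqrt (S2 B) := Real.sqrt_mul (S2_nonneg A) _

lemma herm_symm {d : ℕ} {W : Matrix (Fin d) (Fin d) ℝ} (hW : W.IsHermitian) (i j : Fin d) :
    W j i = W i j := by
  have := hW.apply i j
  simpa using this

lemma herm_isSymm {d : ℕ} {W : Matrix (Fin d) (Fin d) ℝ} (hW : W.IsHermitian) : W.IsSymm := by
  unfold Matrix.IsSymm
  ext i j
  rw [Matrix.transpose_apply]
  exact herm_symm hW i j

lemma quad_comp {d : ℕ} (W : Matrix (Fin d) (Fin d) ℝ) (i j : Fin d) (t : ℝ) :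
    (fun k => t * (if k = i then (1:ℝ) else 0) + (if k = j then (1:ℝ) else 0)) ⬝ᵥ
      (W *ᵥ (fun k => t * (if k = i then (1:ℝ) else 0) + (if k = j then (1:ℝ) else 0)))
    = t * t * W i i + t * W i j + t * W j i + W j j := by
  have e1 : (W *ᵥ (fun k => t * (if k = i then (1:ℝ) else 0) + (if k = j then (1:ℝ) else 0)))
      = fun k => t * W k i + W k j := by
    funext k
    simp [Matrix.mulVec, dotProduct, mul_add, mul_ite, Finset.sum_add_distrib,
      mul_comm, mul_assoc]
  rw [e1]
  simp [dotProduct, add_mul, mul_add, ite_mul, Finset.sum_add_distrib]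
  ring

lemma psd_entry_sq {d : ℕ} {W : Matrix (Fin d) (Fin d) ℝ} (hW : W.PosSemidef) (i j : Fin d) :
    (W i j) ^ 2 ≤ W i i * W j j := by
  have hsym : W j i = W i j := herm_symm hW.1 i j
  rcases eq_or_ne i j with rfl | hij
  · have h := hW.dotProduct_mulVec_nonneg (Pi.single i 1)
    have h' : 0 ≤ W i i := by
      simpa [Matrix.mulVec_single, dotProduct, Pi.single_apply] using h
    nlinarith
  · have key : ∀ t : ℝ, 0 ≤ W i i * (t * t) + (2 * W i j) * t + W j j := by
      intro t
      have h := hW.dotProduct_mulVec_nonneg (fun k => t * (if k = i then (1:ℝ) else 0) + (if k = j then (1:ℝ) else 0))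
      rw [star_trivial, quad_comp W i j t, hsym] at h
      linarith [h]
    have h := discrim_le_zero key
    rw [discrim] at h
    nlinarith

lemma psd_diag_nonneg {d : ℕ} {W : Matrix (Fin d) (Fin d) ℝ} (hW : W.PosSemidef) (i : Fin d) :
    0 ≤ W i i := by
  have := hW.dotProduct_mulVec_nonneg (Pi.single i 1)
  simpa [Matrix.mulVec_single, dotProduct, Pi.single_apply] using this

lemma psd_trace_nonneg {d : ℕ} {W : Matrix (Fin d) (Fin d) ℝ} (hW : W.PosSemidef) :
    0 ≤ W.trace :=
  Finset.sum_nonneg fun i _ => psd_diag_nonneg hW i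

lemma psd_S2_le {d : ℕ} {W : Matrix (Fin d) (Fin d) ℝ} (hW : W.PosSemidef) :
    S2 W ≤ W.trace ^ 2 := by
  unfold S2
  have : W.trace ^ 2 = ∑ i, ∑ j, W i i * W j j := by
    rw [sq, Matrix.trace, Finset.sum_mul_sum]; rfl
  rw [this]
  exact Finset.sum_le_sum fun i _ => Finset.sum_le_sum fun j _ => psd_entry_sq hW i j

lemma trace_mul_psd_nonneg {d : ℕ} {W V : Matrix (Fin d) (Fin d) ℝ}
    (hW : W.PosSemidef) (hV : V.PosSemidef) : 0 ≤ (W * V).trace := by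
  obtain ⟨B, rfl⟩ := (by open scoped MatrixOrder in exact CStarAlgebra.nonneg_iff_eq_star_mul_self.mp hW.nonneg)
  rw [Matrix.star_eq_conjTranspose]
  have : (Bᴴ * B * V).trace = (B * V * Bᴴ).trace := by
    rw [Matrix.mul_assoc, Matrix.trace_mul_comm, Matrix.mul_assoc]
  rw [this]
  exact psd_trace_nonneg (hV.mul_mul_conjTranspose_same B)

lemma trace_eq_sum_eigs {d : ℕ} {A : Matrix (Fin d) (Fin d) ℝ} (hA : A.IsHermitian) :
    A.trace = ∑ i, hA.eigenvalues i := by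
  nth_rewrite 1 [hA.spectral_theorem]
  rw [Unitary.conjStarAlgAut_apply, Matrix.trace_mul_cycle]
  have hU : (star (hA.eigenvectorUnitary : Matrix (Fin d) (Fin d) ℝ)) *
      (hA.eigenvectorUnitary : Matrix (Fin d) (Fin d) ℝ) = 1 :=
    (Matrix.mem_unitaryGroup_iff').mp (hA.eigenvectorUnitary).2
  rw [hU, Matrix.one_mul, Matrix.trace_diagonal]
  simp

lemma det_eq_prod_eigs {d : ℕ} {A : Matrix (Fin d) (Fin d) ℝ} (hA : A.IsHermitian) :
    A.det = ∏ i, hA.eigenvalues i := by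
  have := hA.det_eq_prod_eigenvalues
  simpa using this

lemma logdet_le {d : ℕ} {M : Matrix (Fin d) (Fin d) ℝ} (hM : M.PosDef) :
    Real.log M.det ≤ M.trace - d := by
  rw [det_eq_prod_eigs hM.1, trace_eq_sum_eigs hM.1]
  rw [Real.log_prod (fun i _ => (hM.eigenvalues_pos i).ne')]
  have h : ∀ i ∈ Finset.univ, Real.log (hM.1.eigenvalues i) ≤ hM.1.eigenvalues i - 1 :=
    fun i _ => Real.log_le_sub_one_of_pos (hM.eigenvalues_pos i)
  calc (∑ i, Real.log (hM.1.eigenvalues i)) ≤ ∑ i, (hM.1.eigenvalues i - 1) :=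
        Finset.sum_le_sum h
    _ = (∑ i, hM.1.eigenvalues i) - d := by
        rw [Finset.sum_sub_distrib]; simp

lemma posdef_smul {d : ℕ} {W : Matrix (Fin d) (Fin d) ℝ} (hW : W.PosDef) {c : ℝ} (hc : 0 < c) :
    (c • W).PosDef := by
  constructor
  · unfold Matrix.IsHermitian
    rw [Matrix.conjTranspose_smul, hW.1]
    simp
  · exact (hW.smul hc).2

lemma exists_lam {d : ℕ} (hd : 2 ≤ d) (nZ : Matrix (Fin d) (Fin d) ℝ) (hnZ : nZ.PosDef) :
    ∃ lam : ℝ, 0 < lam ∧ (nZ - lam • (1 : Matrix (Fin d) (Fin d) ℝ)).PosSemidef := by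
  haveI : NeZero d := ⟨by omega⟩
  have hne : (Finset.univ : Finset (Fin d)).Nonempty := Finset.univ_nonempty
  set f := hnZ.1.eigenvalues with hf
  refine ⟨Finset.univ.inf' hne f, ?_, ?_⟩
  · obtain ⟨i, _, hi⟩ := Finset.exists_mem_eq_inf' hne f
    rw [hi]; exact hnZ.eigenvalues_pos i
  · set lam := Finset.univ.inf' hne f with hlam
    have hUspec := hnZ.1.spectral_theorem
    rw [Unitary.conjStarAlgAut_apply] at hUspec
    set U := (hnZ.1.eigenvectorUnitary : Matrix (Fin d) (Fin d) ℝ) with hU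
    have hUU : U * star U = 1 := (Matrix.mem_unitaryGroup_iff).mp (hnZ.1.eigenvectorUnitary).2
    have e1 : lam • (1 : Matrix (Fin d) (Fin d) ℝ)
        = U * (lam • (1 : Matrix (Fin d) (Fin d) ℝ)) * star U := by
      rw [Matrix.mul_smul, Matrix.smul_mul, Matrix.mul_one, hUU]
    have e2 : nZ - lam • 1
        = U * (diagonal (RCLike.ofReal ∘ f) - lam • (1:Matrix (Fin d) (Fin d) ℝ)) * star U := by
      rw [Matrix.mul_sub, Matrix.sub_mul]
      rw [← hUspec, ← e1]
    rw [e2]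
    have hdiag : (diagonal (RCLike.ofReal ∘ f)
        - lam • (1:Matrix (Fin d) (Fin d) ℝ)).PosSemidef := by
      have h1 : (lam • (1:Matrix (Fin d) (Fin d) ℝ)) = diagonal (fun _ => lam) := by
        ext i j
        rcases eq_or_ne i j with rfl|h
        · simp
        · simp [Matrix.one_apply_ne h, Matrix.diagonal_apply_ne _ h]
      rw [h1, Matrix.diagonal_sub]
      refine Matrix.posSemidef_diagonal_iff.mpr fun i => ?_
      simp only [Function.comp_apply, RCLike.ofReal_real_eq_id, id_eq]
      have : lam ≤ f i := Finset.inf'_le f (Finset.mem_univ i)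
      linarith
    have h2 := hdiag.mul_mul_conjTranspose_same U
    rw [Matrix.star_eq_conjTranspose]
    exact h2

lemma key_lam {d : ℕ} {nZ : Matrix (Fin d) (Fin d) ℝ} {lam : ℝ}
    (hPSD : (nZ - lam • (1 : Matrix (Fin d) (Fin d) ℝ)).PosSemidef)
    {W : Matrix (Fin d) (Fin d) ℝ} (hW : W.PosSemidef) :
    lam * W.trace ≤ (W * nZ).trace := by
  have h := trace_mul_psd_nonneg hW hPSD
  rw [Matrix.mul_sub, Matrix.trace_sub] at h
  have h2 : (W * (lam • (1:Matrix (Fin d) (Fin d) ℝ))).trace = lam * W.trace := by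
    rw [Matrix.mul_smul, Matrix.mul_one, Matrix.trace_smul]
    simp
  linarith [h, h2.symm.le]

lemma le_of_sq_le_sq' {u v : ℝ} (h : u ^ 2 ≤ v ^ 2) (hv : 0 ≤ v) : u ≤ v := by
  nlinarith [le_abs_self u, sq_abs u, abs_nonneg u]

/-- Theorem 3.4 (Lipschitz error bound concerning `F_∞` when `n_y > 0`): for
`n = (0, n_y, n_Z)` with `n_y > 0`, `n_Z ≻ 0`, and any `η > 0` there is `κ > 0` with
`dist(q, F_∞) ≤ κ dist(q, K_logdet)` for all `q ∈ {n}^⊥` with `‖q‖ ≤ η`. -/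
theorem stmt_16 (d : ℕ) (hd : 2 ≤ d) (ny : ℝ) (hny : 0 < ny)
    (nZ : Matrix (Fin d) (Fin d) ℝ) (hnZ : nZ.PosDef) :
    ∀ η : ℝ, 0 < η → ∃ κ : ℝ, 0 < κ ∧ ∀ q : E d, q.2.2.IsSymm →
      ip q (0, ny, nZ) = 0 → nrm q ≤ η →
      sdist q {p : E d | p.1 ≤ 0 ∧ p.2.1 = 0 ∧ p.2.2 = 0}
        ≤ κ * sdist q (Klogdet d) := by
  intro η hη
  obtain ⟨lam, hlam, hPSD⟩ := exists_lam hd nZ hnZ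
  set N : ℝ := Real.sqrt (S2 nZ) with hN
  have hN0 : (0:ℝ) ≤ N := Real.sqrt_nonneg _
  set c1 : ℝ := 1 + (N + ny)/lam with hc1
  set c2 : ℝ := 1 + N/ny with hc2
  have hc1p : (0:ℝ) < c1 := by positivity
  have hc2p : (0:ℝ) < c2 := by positivity
  set κ : ℝ := c1 + c2 + c1 with hκ
  have hκp : (0:ℝ) < κ := by positivity
  refine ⟨κ, hκp, ?_⟩
  rintro ⟨x, y, Z⟩ hqsym horth _
  simp only at hqsym
  have hZnZ : (Z * nZ).trace = -(y * ny) := by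
    simp only [ip] at horth
    linarith only [horth]
  have hZZ_S2 : (Z * Z).trace = S2 Z := trace_sq_of_symm hqsym
  set G : ℝ := Real.sqrt (max x 0 ^ 2 + y ^ 2 + (Z * Z).trace) with hG
  -- Step A : sdist to F is at most G
  have stepA : sdist (x, y, Z) {p : E d | p.1 ≤ 0 ∧ p.2.1 = 0 ∧ p.2.2 = 0} ≤ G := by
    have hmem : (min x 0, (0:ℝ), (0:Matrix (Fin d) (Fin d) ℝ))
        ∈ {p : E d | p.1 ≤ 0 ∧ p.2.1 = 0 ∧ p.2.2 = 0} := ⟨min_le_right _ _, rfl, rfl⟩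
    have hval : nrm ((x, y, Z) - (min x 0, (0:ℝ), (0:Matrix (Fin d) (Fin d) ℝ))) = G := by
      have hx : x - min x 0 = max x 0 := by
        rcases le_total x 0 with h|h
        · simp [min_eq_left h, max_eq_right h]
        · simp [min_eq_right h, max_eq_left h]
      have hsub : ((x, y, Z) - (min x 0, (0:ℝ), (0:Matrix (Fin d) (Fin d) ℝ)) : E d)
          = (x - min x 0, y - 0, Z - 0) := by simp [Prod.ext_iff]
      rw [hsub]
      show Real.sqrt ((x - min x 0) ^ 2 + (y - 0) ^ 2 + ((Z - 0) * (Z - 0)).trace) = G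
      rw [hx, sub_zero, sub_zero]
    refine csInf_le ⟨0, ?_⟩ ⟨_, hmem, hval.symm⟩
    rintro r ⟨s, _, rfl⟩
    exact Real.sqrt_nonneg _
  -- Step B : core estimate
  have stepB : ∀ s ∈ Klogdet d, G ≤ κ * nrm ((x, y, Z) - s) := by
    rintro ⟨a, b, W⟩ hs
    have hnrm_eq : nrm ((x, y, Z) - (a, b, W))
        = Real.sqrt ((x - a) ^ 2 + (y - b) ^ 2 + ((Z - W) * (Z - W)).trace) := by
      have hsub : ((x, y, Z) - (a, b, W) : E d) = (x - a, y - b, Z - W) := by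
        simp [Prod.ext_iff]
      rw [hsub]
      rfl
    set P : Matrix (Fin d) (Fin d) ℝ := Z - W with hP
    set D : ℝ := Real.sqrt ((x - a) ^ 2 + (y - b) ^ 2 + (P * P).trace) with hD
    -- facts from membership
    have hW : W.PosSemidef := by
      rcases hs with h | h
      · exact h.2.1.posSemidef
      · exact h.2.2
    have hb : 0 ≤ b := by
      rcases hs with h | h
      · exact le_of_lt h.1
      · exact le_of_eq h.2.1.symm
    have htrW0 : 0 ≤ W.trace := psd_trace_nonneg hW
    have hatr : a ≤ W.trace - d * b := by
      rcases hs with h | h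
      · have hbpos : (0:ℝ) < b := h.1
        have hWpd : W.PosDef := h.2.1
        have hbW : (b⁻¹ • W).PosDef := posdef_smul hWpd (inv_pos.mpr hbpos)
        have hlog := logdet_le hbW
        have htr : (b⁻¹ • W).trace = b⁻¹ * W.trace := by
          rw [Matrix.trace_smul]; simp
        rw [htr] at hlog
        have h3 : b * Real.log ((b⁻¹ • W).det) ≤ b * (b⁻¹ * W.trace - d) :=
          mul_le_mul_of_nonneg_left hlog hb
        have h4 : b * (b⁻¹ * W.trace - d) = W.trace - d * b := by
          field_simp
        have := h.2.2
        simp only at this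
        linarith [this, h3, h4.le]
      · have : a ≤ 0 := h.1
        have hb0 : b = 0 := h.2.1
        rw [hb0]
        simpa using this.trans (by linarith)
    -- symmetric parts
    have hWsym : W.IsSymm := herm_isSymm hW.1
    have hPsym : P.IsSymm := by
      rw [hP]
      unfold Matrix.IsSymm
      ext i j
      rw [Matrix.transpose_apply, Matrix.sub_apply, Matrix.sub_apply,
        hqsym.apply, hWsym.apply]
    have hPP : (P * P).trace = S2 P := trace_sq_of_symm hPsym
    have hPP0 : 0 ≤ (P * P).trace := hPP ▸ S2_nonneg P
    have hu0 : 0 ≤ (x - a) ^ 2 + (y - b) ^ 2 + (P * P).trace := by positivity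
    have hD0 : 0 ≤ D := Real.sqrt_nonneg _
    have hD2 : D ^ 2 = (x - a) ^ 2 + (y - b) ^ 2 + (P * P).trace := Real.sq_sqrt hu0
    have hxa : x - a ≤ D := le_of_sq_le_sq'
      (by linarith [hD2, hPP0, sq_nonneg (y - b)]) hD0
    have hyb : y - b ≤ D := le_of_sq_le_sq'
      (by linarith [hD2, hPP0, sq_nonneg (x - a)]) hD0
    have hby : b - y ≤ D := le_of_sq_le_sq'
      (by rw [show (b - y)^2 = (y - b)^2 by ring]
          linarith [hD2, hPP0, sq_nonneg (x - a)]) hD0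
    have hfrP : Real.sqrt (S2 P) ≤ D := by
      rw [← hPP]
      apply Real.sqrt_le_sqrt
      linarith [sq_nonneg (x - a), sq_nonneg (y - b)]
    -- Cauchy-Schwarz consequences
    have hWZ : ((W - Z) * nZ).trace ≤ N * D := by
      have h1 := trace_mul_le (W - Z) nZ
      have h2 : S2 (W - Z) = S2 P := S2_sub_comm W Z
      rw [h2, ← hN] at h1
      calc ((W - Z) * nZ).trace ≤ Real.sqrt (S2 P) * N := h1
        _ ≤ D * N := mul_le_mul_of_nonneg_right hfrP hN0
        _ = N * D := mul_comm _ _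
    have hsplit : (W * nZ).trace = ((W - Z) * nZ).trace + (Z * nZ).trace := by
      rw [Matrix.sub_mul, Matrix.trace_sub]; ring
    have hkey : lam * W.trace ≤ (W * nZ).trace := key_lam hPSD hW
    -- y * ny ≤ N * D
    have hyny : y * ny ≤ N * D := by
      have : y * ny = ((W - Z) * nZ).trace - (W * nZ).trace := by
        rw [hsplit, hZnZ]; ring
      linarith only [this, hWZ, hkey, mul_nonneg hlam.le htrW0]
    -- trW bound
    have htrW : lam * W.trace ≤ (N + ny) * D := by
      have h1 : (W * nZ).trace ≤ N * D - y * ny := by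
        rw [hsplit, hZnZ]; linarith [hWZ]
      have h2 : -y ≤ D - b := by linarith [hby]
      have h3 : -y * ny ≤ (D - b) * ny := mul_le_mul_of_nonneg_right h2 hny.le
      linarith only [hkey, h1, h3, mul_nonneg hb hny.le]
    have htrWD : W.trace ≤ ((N + ny)/lam) * D := by
      rw [div_mul_eq_mul_div, le_div_iff₀ hlam]
      linarith only [htrW]
    -- x bound
    have hx : x ≤ c1 * D := by
      have h1 : x ≤ W.trace - d * b + D := by linarith [hxa, hatr]
      have h2 : (0:ℝ) ≤ d * b := by positivity
      rw [hc1]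
      linarith only [h1, h2, htrWD, hD0]
    have hmx : max x 0 ≤ c1 * D := max_le hx (mul_nonneg hc1p.le hD0)
    -- y bound
    have hy1 : y ≤ c2 * D := by
      have h0 : y ≤ N * D / ny := (le_div_iff₀ hny).mpr (by linarith only [hyny])
      rw [hc2]
      have hD' : 0 ≤ D := hD0
      have hexpand : (1 + N / ny) * D = D + N * D / ny := by ring
      rw [hexpand]
      linarith only [h0, hD']
    have hy2 : -y ≤ c2 * D := by
      have h2 : -y ≤ D := by linarith only [hby, hb]
      rw [hc2]
      have hND : 0 ≤ N / ny * D := mul_nonneg (div_nonneg hN0 hny.le) hD0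
      have hexpand : (1 + N / ny) * D = D + N / ny * D := by ring
      rw [hexpand]
      linarith only [h2, hND]
    have hysq : y ^ 2 ≤ (c2 * D) ^ 2 := sq_le_sq' (by linarith [hy2]) hy1
    -- Z bound
    have hZZle : (Z * Z).trace ≤ (c1 * D) ^ 2 := by
      have hZeq : Z = P + W := by rw [hP]; abel
      have hexp : (Z * Z).trace
          = (P * P).trace + 2 * (P * W).trace + (W * W).trace := by
        rw [hZeq]
        rw [Matrix.add_mul, Matrix.mul_add, Matrix.mul_add, Matrix.trace_add,
          Matrix.trace_add, Matrix.trace_add, Matrix.trace_mul_comm W P]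
        ring
      have hPW : (P * W).trace ≤ D * W.trace := by
        have h1 := trace_mul_le P W
        have h2 : Real.sqrt (S2 W) ≤ W.trace := by
          have := psd_S2_le hW
          calc Real.sqrt (S2 W) ≤ Real.sqrt (W.trace ^ 2) := Real.sqrt_le_sqrt this
            _ = |W.trace| := Real.sqrt_sq_eq_abs _
            _ = W.trace := abs_of_nonneg htrW0
        calc (P * W).trace ≤ Real.sqrt (S2 P) * Real.sqrt (S2 W) := h1
          _ ≤ D * W.trace := by
              apply mul_le_mul hfrP h2 (Real.sqrt_nonneg _) hD0
      have hWW : (W * W).trace ≤ W.trace ^ 2 := by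
        rw [trace_sq_of_symm hWsym]
        exact psd_S2_le hW
      have hPPD : (P * P).trace ≤ D ^ 2 := by
        linarith only [hD2, sq_nonneg (x - a), sq_nonneg (y - b)]
      have h5 : (Z * Z).trace ≤ (D + W.trace) ^ 2 := by
        linarith only [hexp, hPW, hWW, hPPD]
      have h6 : D + W.trace ≤ c1 * D := by
        rw [hc1]
        linarith only [htrWD]
      have h7 : 0 ≤ D + W.trace := by linarith only [hD0, htrW0]
      have h8 := mul_self_le_mul_self h7 h6
      linarith only [h5, h8]
    -- combine
    have hsum : max x 0 ^ 2 + y ^ 2 + (Z * Z).trace ≤ (κ * D) ^ 2 := by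
      have hmx2 : max x 0 ^ 2 ≤ (c1 * D) ^ 2 := by
        have h0 : 0 ≤ max x 0 := le_max_right _ _
        have := mul_self_le_mul_self h0 hmx
        linarith only [this]
      have hcr1 : 0 ≤ (c1 * D) * (c2 * D) :=
        mul_nonneg (mul_nonneg hc1p.le hD0) (mul_nonneg hc2p.le hD0)
      have hcr2 : 0 ≤ (c1 * D) * (c1 * D) :=
        mul_nonneg (mul_nonneg hc1p.le hD0) (mul_nonneg hc1p.le hD0)
      rw [hκ]
      linarith only [hmx2, hysq, hZZle, hcr1, hcr2]
    rw [hnrm_eq]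
    calc G ≤ Real.sqrt ((κ * D) ^ 2) := Real.sqrt_le_sqrt hsum
      _ = κ * D := Real.sqrt_sq (mul_nonneg hκp.le hD0)
  -- Step C : combine
  have hKne : {r : ℝ | ∃ s ∈ Klogdet d, r = nrm ((x, y, Z) - s)}.Nonempty := by
    refine ⟨nrm ((x, y, Z) - ((0:ℝ), (0:ℝ), (0:Matrix (Fin d) (Fin d) ℝ))),
      ((0:ℝ), (0:ℝ), (0:Matrix (Fin d) (Fin d) ℝ)), ?_, rfl⟩
    exact Or.inr ⟨le_refl 0, rfl, Matrix.PosSemidef.zero⟩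
  have hlb : G / κ ≤ sdist (x, y, Z) (Klogdet d) := by
    apply le_csInf hKne
    rintro r ⟨s, hsK, rfl⟩
    rw [div_le_iff₀ hκp]
    have := stepB s hsK
    linarith only [this]
  have : G ≤ κ * sdist (x, y, Z) (Klogdet d) := by
    rw [div_le_iff₀ hκp] at hlb
    linarith only [hlb]
  linarith only [stepA, this]
end
end

section
/- Let d ≥ 1 be an integer and η > 0. Let (x, y, Z) ∈ E satisfy y > 0, Z positive definite, x = y·log(det(Z/y)), ‖(x, y, Z)‖ ≤ η, and y·log(det(Z/y)) ≥ 0. Then 0 ≤ y·log(det(Z/y)) ≤ y·log(det(η·I_d/y)) ≤ d·y·|log η| − d·y·log y. -/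
open Matrix Filter

noncomputable section

lemma trace_sq_eq_sum_eig {d : ℕ} (Z : Matrix (Fin d) (Fin d) ℝ) (hA : Z.IsHermitian) :
    (Z * Z).trace = ∑ i, hA.eigenvalues i ^ 2 := by
  have h1 : star (hA.eigenvectorUnitary : Matrix (Fin d) (Fin d) ℝ) *
      (hA.eigenvectorUnitary : Matrix (Fin d) (Fin d) ℝ) = 1 :=
    (Matrix.mem_unitaryGroup_iff').mp hA.eigenvectorUnitary.2
  conv_lhs => rw [hA.spectral_theorem, Unitary.conjStarAlgAut_apply]
  rw [Matrix.trace_mul_cycle]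
  simp only [mul_assoc, h1, one_mul, mul_one]
  simp only [← mul_assoc, h1, one_mul]
  rw [Matrix.trace_mul_cycle, ← mul_assoc, h1, one_mul]
  simp [Matrix.diagonal_mul_diagonal, Matrix.trace_diagonal, sq]

/-- Inequality (3.6): for `(x, y, Z)` on the boundary piece of `K_logdet` with `‖(x,y,Z)‖ ≤ η`
and `y log det(Z/y) ≥ 0`, one has
`0 ≤ y log det(Z/y) ≤ y log det(η I / y) ≤ d y |log η| - d y log y`. -/
theorem stmt_19 (d : ℕ) (hd : 1 ≤ d) (η : ℝ) (hη : 0 < η)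
    (x y : ℝ) (Z : Matrix (Fin d) (Fin d) ℝ)
    (hy : 0 < y) (hZ : Z.PosDef)
    (hx : x = y * Real.log ((y⁻¹ • Z).det))
    (hnorm : nrm ((x, y, Z) : E d) ≤ η)
    (hpos : 0 ≤ y * Real.log ((y⁻¹ • Z).det)) :
    0 ≤ y * Real.log ((y⁻¹ • Z).det) ∧
    y * Real.log ((y⁻¹ • Z).det)
      ≤ y * Real.log ((y⁻¹ • (η • (1 : Matrix (Fin d) (Fin d) ℝ))).det) ∧
    y * Real.log ((y⁻¹ • (η • (1 : Matrix (Fin d) (Fin d) ℝ))).det)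
      ≤ d * y * |Real.log η| - d * y * Real.log y := by
  have hherm := hZ.isHermitian
  have htr : (Z * Z).trace = ∑ i, hherm.eigenvalues i ^ 2 := trace_sq_eq_sum_eig Z hherm
  have htr0 : 0 ≤ (Z * Z).trace := htr ▸ Finset.sum_nonneg fun i _ => sq_nonneg _
  have harg : 0 ≤ x ^ 2 + y ^ 2 + (Z * Z).trace := by positivity
  have htrle : (Z * Z).trace ≤ η ^ 2 := by
    have h := Real.sq_sqrt harg
    have h2 : Real.sqrt (x ^ 2 + y ^ 2 + (Z * Z).trace) ≤ η := hnorm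
    nlinarith [Real.sqrt_nonneg (x ^ 2 + y ^ 2 + (Z * Z).trace), sq_nonneg x, sq_nonneg y]
  have heigpos : ∀ i, 0 < hherm.eigenvalues i := hZ.eigenvalues_pos
  have heigle : ∀ i, hherm.eigenvalues i ≤ η := by
    intro i
    have h1 : hherm.eigenvalues i ^ 2 ≤ η ^ 2 :=
      le_trans (Finset.single_le_sum (f := fun j => hherm.eigenvalues j ^ 2)
        (fun j _ => sq_nonneg _) (Finset.mem_univ i)) (htr ▸ htrle)
    nlinarith [heigpos i]
  have hdet : Z.det = ∏ i, hherm.eigenvalues i := by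
    have := hherm.det_eq_prod_eigenvalues
    simpa using this
  have hdetpos : 0 < Z.det := hZ.det_pos
  have hdetle : Z.det ≤ η ^ d := by
    rw [hdet]
    calc ∏ i, hherm.eigenvalues i ≤ ∏ _i : Fin d, η :=
          Finset.prod_le_prod (fun i _ => (heigpos i).le) (fun i _ => heigle i)
      _ = η ^ d := by simp
  have hinvpos : (0:ℝ) < y⁻¹ ^ d := by positivity
  have hdetZ : (y⁻¹ • Z).det = y⁻¹ ^ d * Z.det := by
    rw [Matrix.det_smul]; simp
  have hdetI : (y⁻¹ • (η • (1 : Matrix (Fin d) (Fin d) ℝ))).det = (y⁻¹ * η) ^ d := by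
    rw [smul_smul, Matrix.det_smul]; simp
  refine ⟨hpos, ?_, ?_⟩
  · apply mul_le_mul_of_nonneg_left _ hy.le
    rw [hdetZ, hdetI]
    apply Real.log_le_log (by positivity)
    calc y⁻¹ ^ d * Z.det ≤ y⁻¹ ^ d * η ^ d :=
          mul_le_mul_of_nonneg_left hdetle hinvpos.le
      _ = (y⁻¹ * η) ^ d := (mul_pow _ _ _).symm
  · rw [hdetI, Real.log_pow, Real.log_mul (by positivity) hη.ne', Real.log_inv]
    have h1 : Real.log η ≤ |Real.log η| := le_abs_self _
    have hdy : (0:ℝ) ≤ d * y := by positivity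
    nlinarith [mul_le_mul_of_nonneg_left h1 hdy]
end
end
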